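/- The function F : (Z/2)^n × (Z/2)^n → k defined by F(x,y) = (-1)^{Σ_{j<i} x_i y_j} · Π_i q_i^{x_i y_i}, where q_1,...,q_n are nonzero elements of a field k of characteristic ≠ 2, is a 2-cocycle on the group (Z/2)^n, i.e. F(x,y)F(x+y,z) = F(y,z)F(x,y+z) for all x,y,z, and F(0,x) = F(x,0) = 1. -/

import Mathlib

lemma expo_eq : ∀ a b c : ZMod 2,
    a.val * b.val + (a + b).val * c.val = b.val * c.val + a.val * (b + c).val := by
  decide

lemma neg_one_pow_congr_zmod {k : Type*} [Field k] {m m' : ℕ}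
    (h : ((m : ZMod 2)) = (m' : ZMod 2)) : (-1 : k) ^ m = (-1) ^ m' := by
  rw [neg_one_pow_eq_pow_mod_two, neg_one_pow_eq_pow_mod_two (n := m')]
  exact congrArg _ ((ZMod.natCast_eq_natCast_iff _ _ _).mp h)

/-- The cochain `F(x,y) = (-1)^{Σ_{j<i} x_i y_j} · Π_i q_i^{x_i y_i}` on `(ℤ/2)^n`. -/
noncomputable def Fc {k : Type*} [Field k] {n : ℕ} (q : Fin n → k)
    (x y : Fin n → ZMod 2) : k :=
  (-1 : k) ^ (∑ i, ∑ j ∈ Finset.Iio i, (x i).val * (y j).val) *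
    ∏ i, q i ^ ((x i).val * (y i).val)

/-- `F` is a normalized 2-cocycle on `(ℤ/2)^n` with values in `k^×`. -/
theorem Fc_is_two_cocycle {k : Type*} [Field k] (hk : (2 : k) ≠ 0)
    {n : ℕ} (q : Fin n → k) (hq : ∀ i, q i ≠ 0) :
    (∀ x y z : Fin n → ZMod 2,
        Fc q x y * Fc q (x + y) z = Fc q y z * Fc q x (y + z)) ∧
    (∀ x y : Fin n → ZMod 2, Fc q x y ≠ 0) ∧
    (∀ x : Fin n → ZMod 2, Fc q 0 x = 1 ∧ Fc q x 0 = 1) := by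
  refine ⟨?_, ?_, ?_⟩
  · intro x y z
    have hmul : ∀ (s1 s2 : ℕ) (p1 p2 : k),
        ((-1:k)^s1 * p1) * ((-1)^s2 * p2) = (-1)^(s1+s2) * (p1*p2) := by
      intros; rw [pow_add]; ring
    rw [Fc, Fc, Fc, Fc, hmul, hmul]
    congr 1
    · apply neg_one_pow_congr_zmod
      push_cast
      simp only [Pi.add_apply, ZMod.natCast_val, ZMod.cast_id', id_eq]
      rw [← Finset.sum_add_distrib, ← Finset.sum_add_distrib]
      refine Finset.sum_congr rfl fun i _ => ?_
      rw [← Finset.sum_add_distrib, ← Finset.sum_add_distrib]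
      refine Finset.sum_congr rfl fun j _ => by ring
    · rw [← Finset.prod_mul_distrib, ← Finset.prod_mul_distrib]
      refine Finset.prod_congr rfl fun i _ => ?_
      rw [← pow_add, ← pow_add]
      congr 1
      simpa using expo_eq (x i) (y i) (z i)
  · intro x y
    apply mul_ne_zero
    · exact pow_ne_zero _ (neg_ne_zero.mpr one_ne_zero)
    · exact Finset.prod_ne_zero_iff.mpr fun i _ => pow_ne_zero _ (hq i)
  · intro x
    constructor <;> simp [Fc]
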